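/- arXiv:2102.01423 — 2 statements merged into one kernel-verified Lean document; each statement's English description precedes it below -/
import Mathlib

section
/- Let n : ℝ → ℝ³ and d : ℝ → ℝ be differentiable functions with d(t) ≠ 0 for all t, and let v, ω : ℝ → ℝ³ be the camera translational and angular velocities. Suppose the plane kinematics in the camera frame satisfy n′(t) = −ω(t) × n(t) and d′(t) = ⟨n(t), v(t)⟩. Define χ(t) = −n(t)/d(t). Then χ satisfies the differential equation χ′(t) = ⟨χ(t), v(t)⟩ · χ(t) − ω(t) × χ(t) (equivalently, χ′ = χ χᵀ v − [ω]_× χ). -/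
open Matrix

theorem stmt8 (n v ω : ℝ → Fin 3 → ℝ) (d : ℝ → ℝ)
    (hd : ∀ t, d t ≠ 0)
    (hn : ∀ t, HasDerivAt n (-(crossProduct (ω t) (n t))) t)
    (hdd : ∀ t, HasDerivAt d (n t ⬝ᵥ v t) t)
    (χ : ℝ → Fin 3 → ℝ) (hχ : χ = fun t => -(1 / d t) • n t) :
    ∀ t, HasDerivAt χ ((χ t ⬝ᵥ v t) • χ t - crossProduct (ω t) (χ t)) t := by
  intro t
  have hf : HasDerivAt (fun t => -(1 / d t)) ((n t ⬝ᵥ v t) / (d t)^2) t := by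
    have h := ((hasDerivAt_const t (1:ℝ)).div (hdd t) (hd t)).neg
    convert h using 1
    · rfl
    · rfl
    · rfl
    field_simp
    ring
  have hmain := hf.smul (hn t)
  rw [hχ]
  convert hmain using 1
  · rfl
  · rfl
  · rfl
  · rfl
  subst hχ
  simp only [smul_dotProduct, smul_smul, LinearMap.map_smul, smul_neg, neg_smul, neg_neg]
  ext i
  simp [dotProduct, Finset.sum_apply, crossProduct, Fin.sum_univ_three]
  fin_cases i <;> simp <;> ring
end

section
/- Let C, ΔC ∈ ℝ^{p×n}, A ∈ ℝ^{n×n}, B ∈ ℝ^{n×p}, and x ∈ ℝⁿ, and suppose the p×p matrix (C + ΔC)·B is invertible. Define the control input u = −((C + ΔC)·B)⁻¹ · ΔC · A · x. Then (C + ΔC)·(A·x + B·u) = C·A·x. In particular, for any set E ⊆ ℝᵖ and any c_r ∈ ℝᵖ, if C·A·x − c_r ∈ E then (C + ΔC)·(A·x + B·u) − c_r ∈ E. -/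
open Matrix

theorem stmt12 {p n : ℕ} (C ΔC : Matrix (Fin p) (Fin n) ℝ)
    (A : Matrix (Fin n) (Fin n) ℝ) (B : Matrix (Fin n) (Fin p) ℝ)
    (x : Fin n → ℝ) [Invertible ((C + ΔC) * B)]
    (u : Fin p → ℝ) (hu : u = -(((C + ΔC) * B)⁻¹ *ᵥ (ΔC *ᵥ (A *ᵥ x)))) :
    (C + ΔC) *ᵥ (A *ᵥ x + B *ᵥ u) = C *ᵥ (A *ᵥ x) ∧
    ∀ (E : Set (Fin p → ℝ)) (cr : Fin p → ℝ),
      C *ᵥ (A *ᵥ x) - cr ∈ E → (C + ΔC) *ᵥ (A *ᵥ x + B *ᵥ u) - cr ∈ E := by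
  have key : (C + ΔC) *ᵥ (A *ᵥ x + B *ᵥ u) = C *ᵥ (A *ᵥ x) := by
    subst hu
    have h1 : (C + ΔC) *ᵥ (B *ᵥ -(((C + ΔC) * B)⁻¹ *ᵥ (ΔC *ᵥ (A *ᵥ x))))
        = -(ΔC *ᵥ (A *ᵥ x)) := by
      rw [mulVec_neg, mulVec_neg, mulVec_mulVec, mulVec_mulVec,
        Matrix.mul_inv_of_invertible, one_mulVec]
    rw [mulVec_add, h1, add_mulVec]
    abel
  exact ⟨key, fun E cr h => key ▸ h⟩
end
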